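/- Let n ≥ 1, 1 ≤ p ≤ n-1, and d = gcd(p, 2n-1). Then the characteristic polynomial of M^p (where M is the matrix of quantum multiplication by τ₁ on H•(OG(1,2n+1))) equals λ·(λ^{(2n-1)/d} - 2^{2p/d})^d. -/

import Mathlib

open Matrix Polynomial

/-- The matrix of quantum multiplication by τ₁ on H•(OG(1,2n+1)):
M[i+1][i] = 1 for 0 ≤ i ≤ 2n-2 except M[n][n-1] = 2, M[0][2n-2] = 1,
M[1][2n-1] = 1, all other entries zero. -/
def M (n : ℕ) : Matrix (Fin (2*n)) (Fin (2*n)) ℂ :=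
  Matrix.of fun i j =>
    if (i : ℕ) = (j : ℕ) + 1 then (if (i : ℕ) = n then 2 else 1)
    else if (i : ℕ) = 0 ∧ (j : ℕ) = 2*n - 2 then 1
    else if (i : ℕ) = 1 ∧ (j : ℕ) = 2*n - 1 then 1
    else 0

namespace CharpolyAux

noncomputable section

def evec (n : ℕ) (l : ℂ) : Fin (2*n) → ℂ :=
  fun i => if (i:ℕ) = 0 then 2 else (if n ≤ (i:ℕ) then 2 else 1) * l ^ (2*n - 1 - (i:ℕ))

def kvec (n : ℕ) : Fin (2*n) → ℂ :=
  fun i => if (i:ℕ) = 0 then 1 else if (i:ℕ) = 2*n - 1 then -1 else 0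

lemma M_mulVec {n : ℕ} (hn : 2 ≤ n) (v : Fin (2*n) → ℂ) (i : Fin (2*n)) :
    (M n *ᵥ v) i =
      if (i:ℕ) = 0 then v ⟨2*n-2, by omega⟩
      else if (i:ℕ) = 1 then v ⟨0, by omega⟩ + v ⟨2*n-1, by omega⟩
      else (if (i:ℕ) = n then 2 else 1) * v ⟨(i:ℕ)-1, by omega⟩ := by
  have hi := i.isLt
  have hsum : (M n *ᵥ v) i = ∑ j : Fin (2*n), M n i j * v j := by
    simp [Matrix.mulVec, dotProduct]
  rw [hsum]
  by_cases h0 : (i:ℕ) = 0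
  · rw [if_pos h0]
    rw [Finset.sum_eq_single (⟨2*n-2, by omega⟩ : Fin (2*n))]
    · simp only [M, of_apply, Fin.val_mk]
      rw [if_neg (show ¬((i:ℕ) = 2*n-2+1) by omega), if_pos ⟨h0, trivial⟩, one_mul]
    · intro j _ hj
      have hj' : (j:ℕ) ≠ 2*n-2 := fun hc => hj (Fin.ext (by simpa using hc))
      simp only [M, of_apply]
      rw [if_neg (show ¬((i:ℕ) = (j:ℕ)+1) by omega),
        if_neg (show ¬((i:ℕ) = 0 ∧ (j:ℕ) = 2*n-2) by omega),
        if_neg (show ¬((i:ℕ) = 1 ∧ (j:ℕ) = 2*n-1) by omega), zero_mul]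
    · intro hc; exact absurd (Finset.mem_univ _) hc
  · by_cases h1 : (i:ℕ) = 1
    · rw [if_neg h0, if_pos h1]
      have key : ∀ j : Fin (2*n), M n i j * v j =
          (if (j:ℕ) = 0 then v ⟨0, by omega⟩ else 0)
          + (if (j:ℕ) = 2*n-1 then v ⟨2*n-1, by omega⟩ else 0) := by
        intro j
        have hjlt := j.isLt
        by_cases hj0 : (j:ℕ) = 0
        · simp only [M, of_apply]
          rw [if_pos (show (i:ℕ) = (j:ℕ)+1 by omega),
            if_neg (show ¬((i:ℕ) = n) by omega),
            if_pos hj0, if_neg (show ¬((j:ℕ) = 2*n-1) by omega), add_zero, one_mul]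
          congr 1
          exact Fin.ext (by simpa using hj0)
        · by_cases hj1 : (j:ℕ) = 2*n-1
          · simp only [M, of_apply]
            rw [if_neg (show ¬((i:ℕ) = (j:ℕ)+1) by omega),
              if_neg (show ¬((i:ℕ) = 0 ∧ (j:ℕ) = 2*n-2) by omega),
              if_pos (show (i:ℕ) = 1 ∧ (j:ℕ) = 2*n-1 from ⟨h1, hj1⟩),
              if_neg hj0, if_pos hj1, zero_add, one_mul]
            congr 1
            exact Fin.ext (by simpa using hj1)
          · simp only [M, of_apply]
            rw [if_neg (show ¬((i:ℕ) = (j:ℕ)+1) by omega),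
              if_neg (show ¬((i:ℕ) = 0 ∧ (j:ℕ) = 2*n-2) by omega),
              if_neg (show ¬((i:ℕ) = 1 ∧ (j:ℕ) = 2*n-1) by omega), zero_mul,
              if_neg hj0, if_neg hj1, add_zero]
      rw [Finset.sum_congr rfl (fun j _ => key j), Finset.sum_add_distrib]
      have e1 : ∑ j : Fin (2*n), (if (j:ℕ) = 0 then v ⟨0, by omega⟩ else 0)
          = v ⟨0, by omega⟩ := by
        rw [Finset.sum_eq_single (⟨0, by omega⟩ : Fin (2*n))]
        · simp
        · intro j _ hj
          rw [if_neg (fun hc => hj (Fin.ext (by simpa using hc)))]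
        · intro hc; exact absurd (Finset.mem_univ _) hc
      have e2 : ∑ j : Fin (2*n), (if (j:ℕ) = 2*n-1 then v ⟨2*n-1, by omega⟩ else 0)
          = v ⟨2*n-1, by omega⟩ := by
        rw [Finset.sum_eq_single (⟨2*n-1, by omega⟩ : Fin (2*n))]
        · simp
        · intro j _ hj
          rw [if_neg (fun hc => hj (Fin.ext (by simpa using hc)))]
        · intro hc; exact absurd (Finset.mem_univ _) hc
      rw [e1, e2]
    · rw [if_neg h0, if_neg h1]
      have h2 : 2 ≤ (i:ℕ) := by omega
      rw [Finset.sum_eq_single (⟨(i:ℕ)-1, by omega⟩ : Fin (2*n))]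
      · simp only [M, of_apply]
        rw [if_pos (show (i:ℕ) = (i:ℕ)-1+1 by omega)]
      · intro j _ hj
        have hj' : (j:ℕ) ≠ (i:ℕ)-1 := fun hc => hj (Fin.ext (by simpa using hc))
        simp only [M, of_apply]
        rw [if_neg (show ¬((i:ℕ) = (j:ℕ)+1) by omega),
          if_neg (show ¬((i:ℕ) = 0 ∧ (j:ℕ) = 2*n-2) by omega),
          if_neg (show ¬((i:ℕ) = 1 ∧ (j:ℕ) = 2*n-1) by omega), zero_mul]
      · intro hc; exact absurd (Finset.mem_univ _) hc

lemma evec_eigen {n : ℕ} (hn : 2 ≤ n) {l : ℂ} (hl : l ^ (2*n-1) = 4) :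
    M n *ᵥ evec n l = l • evec n l := by
  funext i
  rw [M_mulVec hn, Pi.smul_apply, smul_eq_mul]
  have hi := i.isLt
  simp only [evec]
  by_cases h0 : (i:ℕ) = 0
  · rw [if_pos h0, if_pos h0, if_neg (show ¬(2*n-2 = 0) by omega),
      if_pos (show n ≤ 2*n-2 by omega), show 2*n-1-(2*n-2) = 1 by omega, pow_one]
    ring
  · by_cases h1 : (i:ℕ) = 1
    · rw [if_neg h0, if_pos h1, if_neg h0, if_pos trivial,
        if_neg (show ¬(2*n-1 = 0) by omega), if_pos (show n ≤ 2*n-1 by omega),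
        if_neg (show ¬(n ≤ (i:ℕ)) by omega),
        show 2*n-1-(2*n-1) = 0 by omega, pow_zero, h1]
      have h4 : l * l ^ (2*n-1-1) = 4 := by
        rw [← hl, ← pow_succ']
        congr 1
        omega
      rw [one_mul, h4]
      norm_num
    · have h2 : 2 ≤ (i:ℕ) := by omega
      rw [if_neg h0, if_neg h1, if_neg h0, if_neg (show ¬((i:ℕ)-1 = 0) by omega)]
      have hexp : l ^ (2*n-1-((i:ℕ)-1)) = l ^ (2*n-1-(i:ℕ)) * l := by
        rw [← pow_succ]
        congr 1
        omega
      by_cases hni : (i:ℕ) = n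
      · rw [if_pos hni, if_neg (show ¬(n ≤ (i:ℕ)-1) by omega),
          if_pos (show n ≤ (i:ℕ) by omega), hexp]
        ring
      · rw [if_neg hni]
        rcases le_or_gt n (i:ℕ) with hle | hlt
        · rw [if_pos (show n ≤ (i:ℕ)-1 by omega), if_pos hle, hexp]
          ring
        · rw [if_neg (show ¬(n ≤ (i:ℕ)-1) by omega), if_neg (show ¬(n ≤ (i:ℕ)) by omega), hexp]
          ring

lemma kvec_eigen {n : ℕ} (hn : 2 ≤ n) : M n *ᵥ kvec n = (0:ℂ) • kvec n := by
  funext i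
  rw [M_mulVec hn, Pi.smul_apply, smul_eq_mul, zero_mul]
  have hi := i.isLt
  simp only [kvec]
  by_cases h0 : (i:ℕ) = 0
  · rw [if_pos h0, if_neg (show ¬(2*n-2 = 0) by omega),
      if_neg (show ¬(2*n-2 = 2*n-1) by omega)]
  · by_cases h1 : (i:ℕ) = 1
    · rw [if_neg h0, if_pos h1, if_pos trivial,
        if_neg (show ¬(2*n-1 = 0) by omega), if_pos trivial]
      ring
    · rw [if_neg h0, if_neg h1, if_neg (show ¬((i:ℕ)-1 = 0) by omega),
        if_neg (show ¬((i:ℕ)-1 = 2*n-1) by omega), mul_zero]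

lemma pow_mulVec_eig {n q : ℕ} {c : ℂ} {w : Fin (2*n) → ℂ}
    (h : M n *ᵥ w = c • w) : (M n) ^ q *ᵥ w = c ^ q • w := by
  induction q with
  | zero => simp
  | succ q ih =>
    rw [pow_succ, ← Matrix.mulVec_mulVec, h, Matrix.mulVec_smul, ih,
      smul_smul, ← pow_succ']

lemma prod_range_mod {β : Type*} [CommMonoid β] (f : ℕ → β) (d m : ℕ) :
    ∏ k ∈ Finset.range (d*m), f (k % m) = (∏ b ∈ Finset.range m, f b) ^ d := by
  induction d with
  | zero => simp
  | succ d ih =>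
    rw [Nat.succ_mul, Finset.prod_range_add, ih, pow_succ]
    congr 1
    refine Finset.prod_congr rfl fun b hb => ?_
    rw [Nat.add_comm, Nat.add_mul_mod_self_right, Nat.mod_eq_of_lt (Finset.mem_range.mp hb)]

lemma charpoly_diag {k : ℕ} (f : Fin k → ℂ) :
    (Matrix.diagonal f).charpoly = ∏ i, (X - C (f i)) := by
  rw [Matrix.charpoly]
  have h : charmatrix (Matrix.diagonal f) = Matrix.diagonal (fun i => (X:ℂ[X]) - C (f i)) := by
    refine Matrix.ext fun i j => ?_
    by_cases hij : i = j
    · subst hij; rw [charmatrix_apply_eq, Matrix.diagonal_apply_eq, Matrix.diagonal_apply_eq]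
    · rw [charmatrix_apply_ne _ _ _ hij, Matrix.diagonal_apply_ne _ hij,
        Matrix.diagonal_apply_ne _ hij, map_zero, neg_zero]
  rw [h, Matrix.det_diagonal]

lemma charpoly_eq_mulVecLin {k : ℕ} (A : Matrix (Fin k) (Fin k) ℂ) :
    A.charpoly = (Matrix.mulVecLin A).charpoly := by
  have h : Matrix.mulVecLin A = Matrix.toLin' A := LinearMap.ext fun v => rfl
  rw [← LinearMap.charpoly_toMatrix (Matrix.mulVecLin A) (Pi.basisFun ℂ (Fin k)),
    LinearMap.toMatrix_eq_toMatrix', h, LinearMap.toMatrix'_toLin']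

def evfun (n : ℕ) (r ζ : ℂ) : Fin (2*n) → ℂ :=
  fun k => if (k:ℕ) < 2*n-1 then r * ζ^(k:ℕ) else 0

def wfun (n : ℕ) (r ζ : ℂ) : Fin (2*n) → Fin (2*n) → ℂ :=
  fun k => if (k:ℕ) < 2*n-1 then evec n (r * ζ^(k:ℕ)) else kvec n

lemma final_prod (N d m p : ℕ) (r ζ : ℂ) (hp : 1 ≤ p) (hm : 0 < m)
    (hNdm : N = d*m) (hpm : p*m = N*(p/d))
    (hζN : ζ ^ N = 1) (hprim : IsPrimitiveRoot (ζ^p) m) (hr4 : r ^ N = 4) :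
    ∏ k ∈ Finset.range (N+1), (X - C ((if k < N then r * ζ^k else 0)^p))
      = (X^m - C ((2:ℂ)^(2*(p/d))))^d * X := by
  rw [Finset.prod_range_succ, if_neg (lt_irrefl N), zero_pow (by omega), map_zero, sub_zero]
  congr 1
  have hζpm : (ζ^p)^m = 1 := by rw [← pow_mul, hpm, pow_mul, hζN, one_pow]
  have hstep2 : ∀ k ∈ Finset.range N,
      (X - C ((if k < N then r * ζ^k else 0)^p)) = (X - C ((ζ^p)^(k % m) * r^p)) := by
    intro k hk
    rw [if_pos (Finset.mem_range.mp hk)]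
    congr 2
    rw [mul_pow, ← pow_mul, mul_comm k p, pow_mul, mul_comm]
    congr 1
    conv_lhs => rw [← Nat.div_add_mod k m]
    rw [pow_add, pow_mul, hζpm, one_pow, one_mul]
  rw [Finset.prod_congr rfl hstep2, hNdm, prod_range_mod (fun b => X - C ((ζ^p)^b * r^p)) d m]
  have hinner : (X:ℂ[X]) ^ m - C ((r^p)^m) = ∏ b ∈ Finset.range m, (X - C ((ζ^p)^b * r^p)) :=
    X_pow_sub_C_eq_prod hprim hm rfl
  rw [← hinner]
  have hrpm : (r^p)^m = (2:ℂ)^(2*(p/d)) := by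
    rw [← pow_mul, hpm, pow_mul, hr4, show (4:ℂ) = 2^2 by norm_num, ← pow_mul]
  rw [hrpm]

end

end CharpolyAux

open CharpolyAux

theorem charpoly_Mp_low (n p : ℕ) (hn : 1 ≤ n) (hp1 : 1 ≤ p) (hp2 : p ≤ n - 1) :
    ((M n) ^ p).charpoly =
      X * (X ^ ((2*n - 1) / Nat.gcd p (2*n - 1)) -
        C ((2:ℂ) ^ (2*p / Nat.gcd p (2*n - 1)))) ^ (Nat.gcd p (2*n - 1)) := by
  have hn2 : 2 ≤ n := by omega
  have hNpos : 0 < 2*n-1 := by omega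
  set d := Nat.gcd p (2*n-1) with hdd
  have hdpos : 0 < d := Nat.gcd_pos_of_pos_left _ hp1
  have hdp : d ∣ p := Nat.gcd_dvd_left p _
  have hdN : d ∣ (2*n-1) := Nat.gcd_dvd_right p _
  set m := (2*n-1)/d with hmm
  have hNdm : 2*n-1 = d * m := (Nat.mul_div_cancel' hdN).symm
  have hmpos : 0 < m := Nat.div_pos (Nat.le_of_dvd hNpos hdN) hdpos
  set ζ : ℂ := Complex.exp (2 * Real.pi * Complex.I / ((2*n-1 : ℕ) : ℂ)) with hζdef
  have hζ : IsPrimitiveRoot ζ (2*n-1) := Complex.isPrimitiveRoot_exp _ (by omega)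
  set r : ℂ := Complex.exp (((Real.log 4 / ((2*n-1 : ℕ) : ℝ)) : ℝ) : ℂ) with hrdef
  have hr4 : r ^ (2*n-1) = 4 := by
    rw [hrdef, ← Complex.exp_nat_mul]
    have hre : ((2*n-1:ℕ):ℝ) * (Real.log 4 / ((2*n-1:ℕ):ℝ)) = Real.log 4 := by
      have hne : ((2*n-1 : ℕ) : ℝ) ≠ 0 := by
        simp only [ne_eq, Nat.cast_eq_zero]; omega
      rw [mul_comm, div_mul_cancel₀ _ hne]
    have he : ((2*n-1 : ℕ) : ℂ) * (((Real.log 4 / ((2*n-1:ℕ):ℝ)) : ℝ) : ℂ)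
        = ((Real.log 4 : ℝ) : ℂ) := by
      rw [← Complex.ofReal_natCast, ← Complex.ofReal_mul, hre]
    rw [he, ← Complex.ofReal_exp, Real.exp_log (by norm_num : (0:ℝ) < 4)]
    norm_num
  have hrne : r ≠ 0 := Complex.exp_ne_zero _
  have hζne : ζ ≠ 0 := hζ.ne_zero (by omega)
  have hl4 : ∀ k : ℕ, (r * ζ^k) ^ (2*n-1) = 4 := by
    intro k
    rw [mul_pow, ← pow_mul, mul_comm k, pow_mul, hζ.pow_eq_one, one_pow, mul_one, hr4]
  -- eigen equations
  have hMw : ∀ k : Fin (2*n), M n *ᵥ wfun n r ζ k = evfun n r ζ k • wfun n r ζ k := by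
    intro k
    simp only [wfun, evfun]
    by_cases hk : (k:ℕ) < 2*n-1
    · rw [if_pos hk, if_pos hk]
      exact evec_eigen hn2 (hl4 k)
    · rw [if_neg hk, if_neg hk]
      exact kvec_eigen hn2
  have hw0 : ∀ k : Fin (2*n), wfun n r ζ k ≠ 0 := by
    intro k hc
    have h0 := congrFun hc ⟨0, by omega⟩
    simp only [wfun] at h0
    by_cases hk : (k:ℕ) < 2*n-1
    · rw [if_pos hk] at h0
      simp [evec] at h0
    · rw [if_neg hk] at h0
      simp [kvec] at h0
  have hinj : Function.Injective (evfun n r ζ) := by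
    intro a b hab
    simp only [evfun] at hab
    by_cases ha : (a:ℕ) < 2*n-1 <;> by_cases hb : (b:ℕ) < 2*n-1
    · rw [if_pos ha, if_pos hb] at hab
      exact Fin.ext (hζ.pow_inj ha hb (mul_left_cancel₀ hrne hab))
    · rw [if_pos ha, if_neg hb] at hab
      exact absurd hab (mul_ne_zero hrne (pow_ne_zero _ hζne))
    · rw [if_neg ha, if_pos hb] at hab
      exact absurd hab.symm (mul_ne_zero hrne (pow_ne_zero _ hζne))
    · have := a.isLt; have := b.isLt
      exact Fin.ext (by omega)
  have heig : ∀ k, Module.End.HasEigenvector (Matrix.mulVecLin (M n)) (evfun n r ζ k)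
      (wfun n r ζ k) := by
    intro k
    exact ⟨Module.End.mem_eigenspace_iff.mpr (hMw k), hw0 k⟩
  have hli : LinearIndependent ℂ (wfun n r ζ) :=
    Module.End.eigenvectors_linearIndependent' (Matrix.mulVecLin (M n)) (evfun n r ζ) hinj _ heig
  haveI : Nonempty (Fin (2*n)) := ⟨⟨0, by omega⟩⟩
  have hcard : Fintype.card (Fin (2*n)) = Module.finrank ℂ (Fin (2*n) → ℂ) := by simp
  let b : Module.Basis (Fin (2*n)) ℂ (Fin (2*n) → ℂ) := basisOfLinearIndependentOfCardEqFinrank hli hcard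
  have hb : ⇑b = wfun n r ζ := coe_basisOfLinearIndependentOfCardEqFinrank hli hcard
  have hg : ∀ k, Matrix.mulVecLin ((M n)^p) (b k) = ((evfun n r ζ k)^p) • (b k) := by
    intro k
    rw [Matrix.mulVecLin_apply, show b k = wfun n r ζ k from congrFun hb k]
    exact pow_mulVec_eig (hMw k)
  have hmat : LinearMap.toMatrix b b (Matrix.mulVecLin ((M n)^p))
      = Matrix.diagonal (fun k => (evfun n r ζ k)^p) := by
    ext i j
    rw [LinearMap.toMatrix_apply, hg j, _root_.map_smul, Module.Basis.repr_self]
    simp only [Finsupp.smul_single, smul_eq_mul, mul_one, Finsupp.single_apply,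
      Matrix.diagonal_apply]
    split_ifs with h1 h2 h3
    · rw [h1]
    · exact absurd h1.symm h2
    · exact absurd h3.symm h1
    · rfl
  have hchar : ((M n)^p).charpoly = ∏ k : Fin (2*n), (X - C ((evfun n r ζ k)^p)) := by
    rw [charpoly_eq_mulVecLin, ← LinearMap.charpoly_toMatrix (Matrix.mulVecLin ((M n)^p)) b,
      hmat, charpoly_diag]
  rw [hchar]
  -- now the product computation
  have hstep1 : ∏ k : Fin (2*n), (X - C ((evfun n r ζ k)^p))
      = ∏ k ∈ Finset.range (2*n), (X - C ((if k < 2*n-1 then r * ζ^k else 0)^p)) :=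
    Fin.prod_univ_eq_prod_range (fun k => X - C ((if k < 2*n-1 then r * ζ^k else 0)^p)) (2*n)
  have hrange : Finset.range (2*n) = Finset.range ((2*n-1)+1) := by
    congr 1
    omega
  have hpm : p * m = (2*n-1) * (p/d) := by
    have hc : d * (p/d) = p := Nat.mul_div_cancel' hdp
    calc p*m = (d*(p/d))*m := by rw [hc]
      _ = (d*m)*(p/d) := by ring
      _ = (2*n-1)*(p/d) := by rw [← hNdm]
  have h1 : IsPrimitiveRoot (ζ^d) m := hζ.pow hNpos hNdm
  have h2 : ζ^p = (ζ^d)^(p/d) := by rw [← pow_mul, Nat.mul_div_cancel' hdp]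
  have hcop : Nat.Coprime (p/d) m := Nat.coprime_div_gcd_div_gcd hdpos
  have hprim : IsPrimitiveRoot (ζ^p) m := h2 ▸ h1.pow_of_coprime _ hcop
  rw [hstep1]
  rw [hrange]
  rw [final_prod (2*n-1) d m p r ζ hp1 hmpos hNdm hpm hζ.pow_eq_one hprim hr4]
  rw [Nat.mul_div_assoc 2 hdp]
  exact mul_comm _ _
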